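/- Let D ≥ 2, λ ≥ 0, and let L₀ : ℝ^p → ℝ be any function, where ℝ^p is partitioned into J groups. Suppose ŵ ∈ ℝ^p is a local minimizer of the non-smooth objective L_w(w) = L₀(w) + λ‖w‖_{2,2/D}^{2/D}. Then every balanced D-gating representation (ω̂, Γ̂) of ŵ — i.e., with ŵ_j = (∏_{d=1}^{D−1} γ̂_{j,d})·ω̂_j and ‖ω̂_j‖₂² = γ̂_{j,d}² for all j and d — is a local minimizer of the D-gated objective L(ω, Γ) = L₀(ω ▶ γ^⊙) + (λ/D)·(‖ω‖₂² + ‖Γ‖_F²). -/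

import Mathlib

lemma amgm_aux (D : ℕ) (hD : 2 ≤ D) (a : ℝ) (ha : 0 ≤ a) (g : Fin (D - 1) → ℝ) :
    (|∏ d, g d| * a) ^ ((2 : ℝ) / (D : ℝ)) ≤ (a ^ 2 + ∑ d, g d ^ 2) / D := by
  have hD0 : (0 : ℝ) < D := by
    have : 0 < D := by omega
    exact_mod_cast this
  set z : Option (Fin (D - 1)) → ℝ := fun o => o.elim (a ^ 2) (fun d => g d ^ 2) with hz
  have hznn : ∀ i : Option (Fin (D - 1)), 0 ≤ z i := by
    rintro (_ | d) <;> simp only [hz, Option.elim] <;> positivity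
  have hcard : (Fintype.card (Option (Fin (D - 1))) : ℝ) = D := by
    rw [Fintype.card_option, Fintype.card_fin]
    have : D - 1 + 1 = D := by omega
    exact_mod_cast congrArg (Nat.cast : ℕ → ℝ) this
  have hw : ∑ _i : Option (Fin (D - 1)), (1 / (D : ℝ)) = 1 := by
    rw [Finset.sum_const, Finset.card_univ, nsmul_eq_mul, hcard]
    field_simp
  have key := Real.geom_mean_le_arith_mean_weighted Finset.univ
    (fun _ => 1 / (D : ℝ)) z (fun i _ => by positivity) hw (fun i _ => hznn i)
  have hprod : ∏ i : Option (Fin (D - 1)), z i ^ (1 / (D : ℝ))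
      = (∏ i : Option (Fin (D - 1)), z i) ^ (1 / (D : ℝ)) :=
    Real.finset_prod_rpow Finset.univ z (fun i _ => hznn i) _
  have hprodval : ∏ i : Option (Fin (D - 1)), z i = a ^ 2 * ∏ d, g d ^ 2 := by
    rw [Fintype.prod_option]
    simp only [hz, Option.elim]
  have hlhs : (|∏ d, g d| * a) ^ ((2 : ℝ) / (D : ℝ))
      = (∏ i : Option (Fin (D - 1)), z i) ^ (1 / (D : ℝ)) := by
    have hx : (0 : ℝ) ≤ |∏ d, g d| * a := by positivity
    have h2 : (2 : ℝ) / (D : ℝ) = (2 : ℝ) * (1 / (D : ℝ)) := by ring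
    rw [h2, Real.rpow_mul hx]
    congr 1
    have : (|∏ d, g d| * a) ^ (2 : ℝ) = (|∏ d, g d| * a) ^ (2 : ℕ) := by
      rw [← Real.rpow_natCast]; norm_num
    rw [this, hprodval, mul_pow, sq_abs, ← Finset.prod_pow]
    ring
  have hrhs : ∑ i : Option (Fin (D - 1)), (1 / (D : ℝ)) * z i
      = (a ^ 2 + ∑ d, g d ^ 2) / D := by
    rw [← Finset.mul_sum, Fintype.sum_option]
    simp only [hz, Option.elim]
    ring
  rw [hlhs, ← hrhs, ← hprod]
  exact key

/-- if `ŵ` is a local minimizer of the non-smooth `L_{2,2/D}`-regularized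
objective, then every balanced `D`-gating representation of `ŵ` is a local minimizer of
the `D`-gated objective. -/
theorem stmt_7 (D J : ℕ) (hD : 2 ≤ D) (p : Fin J → ℕ) (lam : ℝ) (hlam : 0 ≤ lam)
    (L₀ : ((j : Fin J) → EuclideanSpace ℝ (Fin (p j))) → ℝ)
    (what : (j : Fin J) → EuclideanSpace ℝ (Fin (p j)))
    (hmin : IsLocalMin
      (fun w : (j : Fin J) → EuclideanSpace ℝ (Fin (p j)) =>
        L₀ w + lam * ∑ j, ‖w j‖ ^ ((2 : ℝ) / (D : ℝ))) what)
    (ωhat : (j : Fin J) → EuclideanSpace ℝ (Fin (p j)))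
    (Γhat : Fin J → Fin (D - 1) → ℝ)
    (hrep : ∀ j, what j = (∏ d, Γhat j d) • ωhat j)
    (hbal : ∀ j d, ‖ωhat j‖ ^ 2 = Γhat j d ^ 2) :
    IsLocalMin
      (fun q : ((j : Fin J) → EuclideanSpace ℝ (Fin (p j))) × (Fin J → Fin (D - 1) → ℝ) =>
        L₀ (fun j => (∏ d, q.2 j d) • q.1 j) +
          (lam / (D : ℝ)) * ((∑ j, ‖q.1 j‖ ^ 2) + ∑ j, ∑ d, q.2 j d ^ 2))
      (ωhat, Γhat) := by
  classical
  have hD0 : (0 : ℝ) < D := by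
    have : 0 < D := by omega
    exact_mod_cast this
  set Φ : ((j : Fin J) → EuclideanSpace ℝ (Fin (p j))) × (Fin J → Fin (D - 1) → ℝ) →
      ((j : Fin J) → EuclideanSpace ℝ (Fin (p j))) :=
    fun q => fun j => (∏ d, q.2 j d) • q.1 j with hΦ
  have hΦhat : Φ (ωhat, Γhat) = what := funext fun j => (hrep j).symm
  have hcont : ContinuousAt Φ (ωhat, Γhat) := by
    apply Continuous.continuousAt
    apply continuous_pi
    intro j
    exact (Continuous.smul
      (continuous_finset_prod (s := Finset.univ) (f := fun d (q : ((j : Fin J) → EuclideanSpace ℝ (Fin (p j))) × (Fin J → Fin (D - 1) → ℝ)) => q.2 j d) fun d _ =>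
        (continuous_apply d).comp ((continuous_apply j).comp continuous_snd))
      ((continuous_apply j).comp continuous_fst))
  have htend : Filter.Tendsto Φ (nhds (ωhat, Γhat)) (nhds what) := by
    have := hcont.tendsto
    rwa [hΦhat] at this
  have hev := htend.eventually hmin
  -- global AM-GM inequality
  have hineq : ∀ q : ((j : Fin J) → EuclideanSpace ℝ (Fin (p j))) × (Fin J → Fin (D - 1) → ℝ),
      lam * ∑ j, ‖Φ q j‖ ^ ((2 : ℝ) / (D : ℝ))
        ≤ (lam / (D : ℝ)) * ((∑ j, ‖q.1 j‖ ^ 2) + ∑ j, ∑ d, q.2 j d ^ 2) := by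
    intro q
    have h1 : ∀ j, ‖Φ q j‖ ^ ((2 : ℝ) / (D : ℝ)) ≤ (‖q.1 j‖ ^ 2 + ∑ d, q.2 j d ^ 2) / D := by
      intro j
      have : ‖Φ q j‖ = |∏ d, q.2 j d| * ‖q.1 j‖ := by
        simp only [hΦ]
        rw [norm_smul, Real.norm_eq_abs]
      rw [this]
      exact amgm_aux D hD _ (norm_nonneg _) _
    calc lam * ∑ j, ‖Φ q j‖ ^ ((2 : ℝ) / (D : ℝ))
        ≤ lam * ∑ j, (‖q.1 j‖ ^ 2 + ∑ d, q.2 j d ^ 2) / D :=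
          mul_le_mul_of_nonneg_left (Finset.sum_le_sum fun j _ => h1 j) hlam
      _ = (lam / (D : ℝ)) * ((∑ j, ‖q.1 j‖ ^ 2) + ∑ j, ∑ d, q.2 j d ^ 2) := by
          rw [← Finset.sum_div, Finset.sum_add_distrib]
          ring
  -- equality at the balanced point
  have hwnorm : ∀ j, ‖what j‖ ^ ((2 : ℝ) / (D : ℝ)) = ‖ωhat j‖ ^ 2 := by
    intro j
    have hnn : (0 : ℝ) ≤ ‖what j‖ := norm_nonneg _
    have hsq : ‖what j‖ ^ (2 : ℕ) = (‖ωhat j‖ ^ 2) ^ D := by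
      rw [hrep j, norm_smul, Real.norm_eq_abs, mul_pow, sq_abs, ← Finset.prod_pow]
      have : ∀ d : Fin (D - 1), Γhat j d ^ 2 = ‖ωhat j‖ ^ 2 := fun d => (hbal j d).symm
      rw [Finset.prod_congr rfl fun d _ => this d, Finset.prod_const, Finset.card_univ,
        Fintype.card_fin, ← pow_succ]
      congr 1
      omega
    have h2 : (2 : ℝ) / (D : ℝ) = (2 : ℝ) * (1 / (D : ℝ)) := by ring
    rw [h2, Real.rpow_mul hnn]
    have e1 : ‖what j‖ ^ (2 : ℝ) = (‖ωhat j‖ ^ 2) ^ D := by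
      rw [← hsq, ← Real.rpow_natCast]; norm_num
    rw [e1, ← Real.rpow_natCast (‖ωhat j‖ ^ 2) D, ← Real.rpow_mul (by positivity)]
    rw [mul_one_div, div_self (ne_of_gt hD0), Real.rpow_one]
  have heq : lam * ∑ j, ‖what j‖ ^ ((2 : ℝ) / (D : ℝ))
      = (lam / (D : ℝ)) * ((∑ j, ‖ωhat j‖ ^ 2) + ∑ j, ∑ d, Γhat j d ^ 2) := by
    have hΓ : ∀ j, ∑ d, Γhat j d ^ 2 = ((D : ℝ) - 1) * ‖ωhat j‖ ^ 2 := by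
      intro j
      rw [Finset.sum_congr rfl fun d _ => (hbal j d).symm, Finset.sum_const,
        Finset.card_univ, Fintype.card_fin, nsmul_eq_mul]
      congr 1
      have h1 : (1 : ℕ) ≤ D := by omega
      push_cast [Nat.cast_sub h1]
      ring
    rw [Finset.sum_congr rfl fun j _ => hwnorm j, Finset.sum_congr rfl fun j _ => hΓ j,
      ← Finset.mul_sum]
    field_simp
    ring
  -- conclude
  have : ∀ᶠ q in nhds (ωhat, Γhat),
      L₀ (fun j => (∏ d, Γhat j d) • ωhat j) +
          (lam / (D : ℝ)) * ((∑ j, ‖ωhat j‖ ^ 2) + ∑ j, ∑ d, Γhat j d ^ 2)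
        ≤ L₀ (fun j => (∏ d, q.2 j d) • q.1 j) +
          (lam / (D : ℝ)) * ((∑ j, ‖q.1 j‖ ^ 2) + ∑ j, ∑ d, q.2 j d ^ 2) := by
    filter_upwards [hev] with q hq
    have e1 : (fun j => (∏ d, Γhat j d) • ωhat j) = what := funext fun j => (hrep j).symm
    calc L₀ (fun j => (∏ d, Γhat j d) • ωhat j) +
          (lam / (D : ℝ)) * ((∑ j, ‖ωhat j‖ ^ 2) + ∑ j, ∑ d, Γhat j d ^ 2)
        = L₀ what + lam * ∑ j, ‖what j‖ ^ ((2 : ℝ) / (D : ℝ)) := by rw [e1, heq]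
      _ ≤ L₀ (Φ q) + lam * ∑ j, ‖Φ q j‖ ^ ((2 : ℝ) / (D : ℝ)) := hq
      _ ≤ L₀ (Φ q) + (lam / (D : ℝ)) * ((∑ j, ‖q.1 j‖ ^ 2) + ∑ j, ∑ d, q.2 j d ^ 2) :=
          add_le_add_right (hineq q) _
  exact this
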